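/- Let X have the Fréchet distribution with parameters α > 0, μ ∈ ℝ, σ > 0, and let α₀ = log(log 4 / log(4/3)) / log(4/3). If 0 < α ≤ α₀ then p_eL(X) = 0, while if α > α₀ then p_eL(X) = exp(−[4·(log 4)^{−1/α} − 3·(log(4/3))^{−1/α}]^{−α}) > 0. -/

import Mathlib

open MeasureTheory Real

variable {Ω : Type*} [MeasurableSpace Ω]

/-- Generalized inverse of the c.d.f.: `F⁻(p) = inf {x : F(x) ≥ p}`. -/
noncomputable def quantile (μ : Measure Ω) (X : Ω → ℝ) (p : ℝ) : ℝ :=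
  sInf {x : ℝ | p ≤ (μ {ω | X ω ≤ x}).toReal}

noncomputable def Q1 (μ : Measure Ω) (X : Ω → ℝ) : ℝ := quantile μ X (1/4)

noncomputable def Q3 (μ : Measure Ω) (X : Ω → ℝ) : ℝ := quantile μ X (3/4)

noncomputable def IQR (μ : Measure Ω) (X : Ω → ℝ) : ℝ := Q3 μ X - Q1 μ X

/-- Probability of a left extreme outlier. -/
noncomputable def peL (μ : Measure Ω) (X : Ω → ℝ) : ℝ :=
  (μ {ω | X ω < Q1 μ X - 3 * IQR μ X}).toReal

/-- Probability of a right extreme outlier. -/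
noncomputable def peR (μ : Measure Ω) (X : Ω → ℝ) : ℝ :=
  (μ {ω | Q3 μ X + 3 * IQR μ X < X ω}).toReal

noncomputable def pe2 (μ : Measure Ω) (X : Ω → ℝ) : ℝ := peL μ X + peR μ X
lemma quantile_eq (μ : Measure Ω) [IsProbabilityMeasure μ]
    (X : Ω → ℝ) (α m σ : ℝ) (ha : 0 < α) (hs : 0 < σ)
    (hcdf : ∀ x : ℝ, m < x →
      (μ {ω | X ω ≤ x}).toReal = Real.exp (-((x - m) / σ) ^ (-α)))
    (hlow : ∀ x : ℝ, x ≤ m → μ {ω | X ω ≤ x} = 0)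
    (p : ℝ) (hp0 : 0 < p) (hp1 : p < 1) :
    quantile μ X p = m + σ * (-Real.log p) ^ (-1/α) := by
  have hlp : 0 < -Real.log p := by
    have := Real.log_neg hp0 hp1; linarith
  have hpos : 0 < σ * (-Real.log p) ^ (-1/α) :=
    mul_pos hs (Real.rpow_pos_of_pos hlp _)
  set q : ℝ := m + σ * (-Real.log p) ^ (-1/α) with hq
  have hqm : m < q := by rw [hq]; linarith
  have hqs : (q - m) / σ = (-Real.log p) ^ (-1/α) := by
    rw [hq]; field_simp; ring
  have hFq : (μ {ω | X ω ≤ q}).toReal = p := by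
    rw [hcdf q hqm, hqs, ← Real.rpow_mul hlp.le]
    have h1 : (-1/α) * (-α) = 1 := by field_simp
    rw [h1, Real.rpow_one, neg_neg, Real.exp_log hp0]
  have hlb : ∀ x ∈ {x : ℝ | p ≤ (μ {ω | X ω ≤ x}).toReal}, q ≤ x := by
    intro x hx
    by_contra hlt
    push_neg at hlt
    rcases le_or_gt x m with hxm | hxm
    · have h0 := hlow x hxm
      simp only [Set.mem_setOf_eq, h0, ENNReal.toReal_zero] at hx
      linarith
    · have h1 : (x - m)/σ < (q - m)/σ := by gcongr
      have h2 : 0 < (x - m)/σ := div_pos (by linarith) hs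
      have h3 : ((q - m)/σ) ^ (-α) < ((x - m)/σ) ^ (-α) :=
        Real.rpow_lt_rpow_of_neg h2 h1 (by linarith)
      have h4 : (μ {ω | X ω ≤ x}).toReal < p := by
        rw [hcdf x hxm, ← hFq, hcdf q hqm]
        exact Real.exp_lt_exp.mpr (by linarith)
      simp only [Set.mem_setOf_eq] at hx
      linarith
  refine le_antisymm (csInf_le ⟨q, hlb⟩ ?_) (le_csInf ⟨q, hFq.ge⟩ hlb)
  exact hFq.ge

lemma measure_lt_eq (μ : Measure Ω) [IsProbabilityMeasure μ]
    (X : Ω → ℝ) (α m σ : ℝ) (ha : 0 < α) (hs : 0 < σ)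
    (hcdf : ∀ x : ℝ, m < x →
      (μ {ω | X ω ≤ x}).toReal = Real.exp (-((x - m) / σ) ^ (-α)))
    (c : ℝ) (hc : m < c) :
    (μ {ω | X ω < c}).toReal = Real.exp (-((c - m) / σ) ^ (-α)) := by
  set g : ℝ → ℝ := fun x => Real.exp (-((x - m) / σ) ^ (-α)) with hg
  have hne : (c - m) / σ ≠ 0 := ne_of_gt (div_pos (by linarith) hs)
  have h0 : ContinuousAt (fun x : ℝ => (x - m) / σ) c := by fun_prop
  have h1 : ContinuousAt (fun x : ℝ => ((x - m) / σ) ^ (-α)) c :=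
    h0.rpow_const (Or.inl hne)
  have hgc : ContinuousAt g c := Real.continuous_exp.continuousAt.comp h1.neg
  set x : ℕ → ℝ := fun n => c - (c - m) / (n + 2) with hxdef
  have hxc : ∀ n : ℕ, x n < c := by
    intro n
    have : 0 < (c - m) / ((n:ℝ) + 2) := div_pos (by linarith) (by positivity)
    simp only [hxdef]; linarith
  have hxm : ∀ n : ℕ, m < x n := by
    intro n
    have h2 : (c - m) / ((n:ℝ) + 2) < (c - m) := by
      rw [div_lt_iff₀ (by positivity)]
      nlinarith [Nat.cast_nonneg (α := ℝ) n]
    simp only [hxdef]; linarith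
  have hxtend : Filter.Tendsto x Filter.atTop (nhds c) := by
    rw [hxdef]
    have h0 : Filter.Tendsto (fun n : ℕ => (c - m) / ((n:ℝ) + 2)) Filter.atTop (nhds 0) := by
      apply Filter.Tendsto.div_atTop tendsto_const_nhds
      exact Filter.tendsto_atTop_add_const_right _ 2 tendsto_natCast_atTop_atTop
    simpa using tendsto_const_nhds.sub h0
  have hgt : Filter.Tendsto (fun n => g (x n)) Filter.atTop (nhds (g c)) :=
    hgc.tendsto.comp hxtend
  apply le_antisymm
  · calc (μ {ω | X ω < c}).toReal ≤ (μ {ω | X ω ≤ c}).toReal := by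
          apply ENNReal.toReal_mono (measure_ne_top μ _)
          apply measure_mono
          intro ω hω
          simp only [Set.mem_setOf_eq] at *
          linarith
      _ = g c := hcdf c hc
  · have hle : g c ≤ (μ {ω | X ω < c}).toReal := by
      apply le_of_tendsto hgt
      filter_upwards with n
      have e1 : g (x n) = (μ {ω | X ω ≤ x n}).toReal := (hcdf (x n) (hxm n)).symm
      rw [e1]
      apply ENNReal.toReal_mono (measure_ne_top μ _)
      apply measure_mono
      intro ω hω
      simp only [Set.mem_setOf_eq] at *
      have := hxc n
      linarith
    exact hle

lemma threshold_iff (α : ℝ) (ha : 0 < α) :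
    0 < 4 * (Real.log 4) ^ (-1/α) - 3 * (Real.log (4/3)) ^ (-1/α) ↔
    Real.log (Real.log 4 / Real.log (4/3)) / Real.log (4/3) < α := by
  have hL4 : 0 < Real.log 4 := Real.log_pos (by norm_num)
  have hL43 : 0 < Real.log (4/3) := Real.log_pos (by norm_num)
  have hu : 0 < (Real.log 4) ^ (-1/α) := Real.rpow_pos_of_pos hL4 _
  have hv : 0 < (Real.log (4/3)) ^ (-1/α) := Real.rpow_pos_of_pos hL43 _
  have h43 : Real.log (4/3) = Real.log 4 - Real.log 3 := Real.log_div (by norm_num) (by norm_num)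
  have hlog : Real.log (Real.log 4 / Real.log (4/3)) =
      Real.log (Real.log 4) - Real.log (Real.log (4/3)) :=
    Real.log_div (ne_of_gt hL4) (ne_of_gt hL43)
  have e1 : α * (Real.log 3 + -1/α * Real.log (Real.log (4/3)))
      = α * Real.log 3 - Real.log (Real.log (4/3)) := by field_simp; ring
  have e2 : α * (Real.log 4 + -1/α * Real.log (Real.log 4))
      = α * Real.log 4 - Real.log (Real.log 4) := by field_simp; ring
  have e3 : α * Real.log (4/3) = α * Real.log 4 - α * Real.log 3 := by rw [h43]; ring
  constructor
  · intro h
    have h1 : 3 * (Real.log (4/3)) ^ (-1/α) < 4 * (Real.log 4) ^ (-1/α) := by linarith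
    have h2 : Real.log (3 * (Real.log (4/3)) ^ (-1/α)) <
        Real.log (4 * (Real.log 4) ^ (-1/α)) :=
      Real.log_lt_log (by positivity) h1
    rw [Real.log_mul (by norm_num) (ne_of_gt hv), Real.log_mul (by norm_num) (ne_of_gt hu),
      Real.log_rpow hL43, Real.log_rpow hL4] at h2
    have h2' := (mul_lt_mul_iff_right₀ ha).mpr h2
    rw [e1, e2] at h2'
    rw [div_lt_iff₀ hL43, hlog]
    linarith
  · intro h
    rw [div_lt_iff₀ hL43, hlog] at h
    have h2' : α * (Real.log 3 + -1/α * Real.log (Real.log (4/3))) <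
        α * (Real.log 4 + -1/α * Real.log (Real.log 4)) := by
      rw [e1, e2]; linarith
    have h2 := lt_of_mul_lt_mul_left h2' ha.le
    have h3 : Real.log (3 * (Real.log (4/3)) ^ (-1/α)) <
          Real.log (4 * (Real.log 4) ^ (-1/α)) := by
        rw [Real.log_mul (by norm_num) (ne_of_gt hv), Real.log_mul (by norm_num) (ne_of_gt hu),
          Real.log_rpow hL43, Real.log_rpow hL4]
        exact h2
    have h4 := Real.exp_lt_exp.mpr h3
    rw [Real.exp_log (by positivity), Real.exp_log (by positivity)] at h4
    linarith

theorem frechet_peL (μ : Measure Ω) [IsProbabilityMeasure μ]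
    (X : Ω → ℝ) (hX : Measurable X) (α m σ : ℝ) (ha : 0 < α) (hs : 0 < σ)
    (hcdf : ∀ x : ℝ, m < x →
      (μ {ω | X ω ≤ x}).toReal = Real.exp (-((x - m) / σ) ^ (-α)))
    (hlow : ∀ x : ℝ, x ≤ m → μ {ω | X ω ≤ x} = 0) :
    (α ≤ Real.log (Real.log 4 / Real.log (4/3)) / Real.log (4/3) → peL μ X = 0) ∧
    (Real.log (Real.log 4 / Real.log (4/3)) / Real.log (4/3) < α →
      peL μ X = Real.exp
        (-(4 * (Real.log 4) ^ (-1/α) - 3 * (Real.log (4/3)) ^ (-1/α)) ^ (-α)) ∧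
      0 < peL μ X) := by
  set t : ℝ := 4 * (Real.log 4) ^ (-1/α) - 3 * (Real.log (4/3)) ^ (-1/α) with ht
  have hQ1 : Q1 μ X = m + σ * (Real.log 4) ^ (-1/α) := by
    have h := quantile_eq μ X α m σ ha hs hcdf hlow (1/4) (by norm_num) (by norm_num)
    rw [Q1, h]
    congr 2
    rw [one_div, Real.log_inv, neg_neg]
  have hQ3 : Q3 μ X = m + σ * (Real.log (4/3)) ^ (-1/α) := by
    have h := quantile_eq μ X α m σ ha hs hcdf hlow (3/4) (by norm_num) (by norm_num)
    rw [Q3, h]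
    congr 2
    rw [Real.log_div (by norm_num) (by norm_num), Real.log_div (by norm_num) (by norm_num)]
    ring
  have hc : Q1 μ X - 3 * IQR μ X = m + σ * t := by
    rw [IQR, hQ1, hQ3, ht]; ring
  constructor
  · intro hle
    have htle : t ≤ 0 := by
      by_contra hpos
      push_neg at hpos
      exact absurd ((threshold_iff α ha).mp hpos) (not_lt.mpr hle)
    have hcm : Q1 μ X - 3 * IQR μ X ≤ m := by
      nlinarith
    rw [peL]
    have h0 : μ {ω | X ω < Q1 μ X - 3 * IQR μ X} = 0 := by
      apply measure_mono_null _ (hlow _ hcm)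
      intro ω hω
      simp only [Set.mem_setOf_eq] at *
      linarith
    rw [h0, ENNReal.toReal_zero]
  · intro hgt
    have htpos : 0 < t := (threshold_iff α ha).mpr hgt
    have hcm : m < Q1 μ X - 3 * IQR μ X := by nlinarith
    have heq : peL μ X = Real.exp (-t ^ (-α)) := by
      rw [peL, measure_lt_eq μ X α m σ ha hs hcdf _ hcm]
      congr 2
      rw [hc]
      rw [add_sub_cancel_left, mul_div_cancel_left₀ _ hs.ne']
    exact ⟨heq, heq ▸ Real.exp_pos _⟩
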